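/- Let n ≥ 1 be an integer, p > 2 a real number, R₂ > 0, and f⁻ : [0,R₂] → ℝ continuous. Set D₁ := (1/R₂ⁿ)∫_0^{R₂} f⁻(ρ)ρ^{n−1} dρ, Ḡ(r) := D₁·R₂ⁿ/rⁿ − (1/rⁿ)∫_r^{R₂} f⁻(ρ)ρ^{n−1} dρ for r ∈ (0,R₂], and define ū(x) := ∫_{R₂}^{|x|} sgn(Ḡ(ρ))·|Ḡ(ρ)ρ|^{1/(p−1)} dρ for 0 < |x| ≤ R₂. Then: (i) Ḡ(r) = (1/rⁿ)∫_0^r f⁻(ρ)ρ^{n−1} dρ for all r ∈ (0,R₂] and Ḡ is differentiable on (0,R₂] with Ḡ'(r) + n·Ḡ(r)/r = f⁻(r)/r; (ii) ū(x) = 0 whenever |x| = R₂; (iii) ū is differentiable at every x with 0 < |x| < R₂, with |∇ū(x)|^{p−2}∇ū(x) = Ḡ(|x|)·x, and the divergence of x ↦ |∇ū(x)|^{p−2}∇ū(x) equals f⁻(|x|), i.e. ū is a radially symmetric classical solution of div(|∇u|^{p−2}∇u) − f⁻ = 0 on the punctured ball {0 < |x| < R₂}. -/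

import Mathlib

open Real Set intervalIntegral

lemma cont_signpow {α : ℝ} (hα : 0 < α) :
    Continuous (fun a : ℝ => Real.sign a * |a| ^ α) := by
  rw [continuous_iff_continuousAt]
  intro a
  rcases lt_trichotomy a 0 with h | h | h
  · have : ∀ᶠ b in nhds a, Real.sign b * |b| ^ α = (-1) * |b| ^ α := by
      filter_upwards [eventually_lt_nhds h] with b hb
      rw [Real.sign_of_neg hb]
    refine ContinuousAt.congr ?_ (Filter.EventuallyEq.symm this)
    exact (continuous_const.mul (continuous_abs.rpow_const (fun _ => Or.inr hα.le))).continuousAt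
  · subst h
    have hb : Filter.Tendsto (fun b : ℝ => Real.sign b * |b| ^ α) (nhds 0) (nhds 0) := by
      rw [tendsto_zero_iff_norm_tendsto_zero]
      apply squeeze_zero (g := fun b : ℝ => |b| ^ α)
      · intro t; positivity
      · intro t
        rw [norm_mul, norm_eq_abs, norm_eq_abs, abs_of_nonneg (Real.rpow_nonneg (abs_nonneg t) α)]
        calc |Real.sign t| * |t| ^ α ≤ 1 * |t| ^ α := by
              gcongr
              rcases Real.sign_apply_eq t with h | h | h <;> simp [h]
          _ = |t| ^ α := one_mul _
      · have : Filter.Tendsto (fun b : ℝ => |b| ^ α) (nhds 0) (nhds (|(0:ℝ)| ^ α)) :=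
          (continuous_abs.rpow_const (fun _ => Or.inr hα.le)).continuousAt
        simpa [Real.zero_rpow hα.ne'] using this
    simpa [Real.zero_rpow hα.ne', ContinuousAt] using hb
  · have : ∀ᶠ b in nhds a, Real.sign b * |b| ^ α = 1 * |b| ^ α := by
      filter_upwards [eventually_gt_nhds h] with b hb
      rw [Real.sign_of_pos hb]
    refine ContinuousAt.congr ?_ (Filter.EventuallyEq.symm this)
    exact (continuous_const.mul (continuous_abs.rpow_const (fun _ => Or.inr hα.le))).continuousAt

lemma trace_smulRight' {E : Type*} [NormedAddCommGroup E] [NormedSpace ℝ E]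
    [FiniteDimensional ℝ E] (c : E →L[ℝ] ℝ) (x : E) :
    LinearMap.trace ℝ E (c.smulRight x).toLinearMap = c x := by
  have h1 : (c.smulRight x).toLinearMap
      = (LinearMap.toSpanSingleton ℝ E x).comp (c : E →ₗ[ℝ] ℝ) := by
    ext v; simp [LinearMap.toSpanSingleton, smul_eq_mul, mul_comm]
  rw [h1, LinearMap.trace_comp_comm']
  have h2 : (c : E →ₗ[ℝ] ℝ).comp (LinearMap.toSpanSingleton ℝ E x) = (c x) • LinearMap.id := by
    ext; simp [LinearMap.toSpanSingleton, smul_eq_mul, mul_comm]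
  rw [h2, map_smul, LinearMap.trace_id]
  simp

lemma hasFDerivAt_norm' {E : Type*} [NormedAddCommGroup E] [InnerProductSpace ℝ E]
    (x : E) (hx : x ≠ 0) :
    HasFDerivAt (fun y : E => ‖y‖) (‖x‖⁻¹ • innerSL ℝ x) x := by
  have h1 : HasFDerivAt (fun y : E => ‖y‖ ^ 2) (2 • innerSL ℝ x) x := by
    simpa using (hasFDerivAt_id x).norm_sq
  have hxn : ‖x‖ ≠ 0 := norm_ne_zero_iff.mpr hx
  have hx2 : (‖x‖ ^ 2 : ℝ) ≠ 0 := pow_ne_zero 2 hxn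
  have h2 : HasDerivAt Real.sqrt (1 / (2 * Real.sqrt (‖x‖ ^ 2))) (‖x‖ ^ 2) :=
    Real.hasDerivAt_sqrt hx2
  have h3 := h2.comp_hasFDerivAt x h1
  have h4 : HasFDerivAt (fun y : E => ‖y‖) ((1 / (2 * Real.sqrt (‖x‖ ^ 2))) • 2 • innerSL ℝ x) x := by
    refine h3.congr_of_eventuallyEq ?_
    filter_upwards with y
    simp [Function.comp, Real.sqrt_sq (norm_nonneg y)]
  convert h4 using 1
  rw [Real.sqrt_sq (norm_nonneg x)]
  ext v
  simp [smul_smul]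
  ring

lemma real_sign_mul_abs (a : ℝ) : Real.sign a * |a| = a := by
  rcases lt_trichotomy a 0 with h | h | h
  · rw [Real.sign_of_neg h, abs_of_neg h]; ring
  · simp [h]
  · rw [Real.sign_of_pos h, abs_of_pos h]; ring

lemma real_sign_mul_pos (a : ℝ) {ρ : ℝ} (hρ : 0 < ρ) : Real.sign (a * ρ) = Real.sign a := by
  rcases lt_trichotomy a 0 with h | h | h
  · rw [Real.sign_of_neg h, Real.sign_of_neg (mul_neg_of_neg_of_pos h hρ)]
  · simp [h]
  · rw [Real.sign_of_pos h, Real.sign_of_pos (mul_pos h hρ)]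


/-- Explicit radially symmetric solution of `div(|∇u|^{p-2}∇u) - f⁻ = 0` on the
punctured target ball `{0 < |x| < R₂}` (Theorem 1.1, disjoint-balls case, target ball). -/
theorem pLaplacian_explicit_solution_target_ball (n : ℕ) (hn : 1 ≤ n) (p : ℝ) (hp : 2 < p)
    (R₂ : ℝ) (hR₂ : 0 < R₂)
    (f : ℝ → ℝ) (hf : ContinuousOn f (Set.Icc 0 R₂))
    (D₁ : ℝ) (hD₁ : D₁ = (1 / R₂ ^ n) * ∫ ρ in (0:ℝ)..R₂, f ρ * ρ ^ (n - 1))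
    (Gbar : ℝ → ℝ)
    (hGbar : ∀ r, Gbar r = D₁ * R₂ ^ n / r ^ n -
      (1 / r ^ n) * ∫ ρ in r..R₂, f ρ * ρ ^ (n - 1))
    (u : EuclideanSpace ℝ (Fin n) → ℝ)
    (hu : ∀ x, u x = ∫ ρ in R₂..‖x‖,
      Real.sign (Gbar ρ) * |Gbar ρ * ρ| ^ (1 / (p - 1))) :
    -- (i) alternative formula and ODE for `Ḡ`
    ((∀ r ∈ Set.Ioc (0:ℝ) R₂,
        Gbar r = (1 / r ^ n) * ∫ ρ in (0:ℝ)..r, f ρ * ρ ^ (n - 1)) ∧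
      ∀ r ∈ Set.Ioc (0:ℝ) R₂,
        HasDerivWithinAt Gbar (f r / r - n * Gbar r / r) (Set.Ioc (0:ℝ) R₂) r) ∧
    -- (ii) boundary condition
    (∀ x : EuclideanSpace ℝ (Fin n), ‖x‖ = R₂ → u x = 0) ∧
    -- (iii) differentiability, flux identity and divergence
    (∀ x : EuclideanSpace ℝ (Fin n), 0 < ‖x‖ → ‖x‖ < R₂ →
      DifferentiableAt ℝ u x ∧
      ‖gradient u x‖ ^ (p - 2) • gradient u x = Gbar ‖x‖ • x ∧
      DifferentiableAt ℝ
        (fun y : EuclideanSpace ℝ (Fin n) => ‖gradient u y‖ ^ (p - 2) • gradient u y) x ∧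
      LinearMap.trace ℝ (EuclideanSpace ℝ (Fin n))
        (fderiv ℝ
          (fun y : EuclideanSpace ℝ (Fin n) => ‖gradient u y‖ ^ (p - 2) • gradient u y)
          x).toLinearMap = f ‖x‖) := by
  -- basic objects
  set h : ℝ → ℝ := fun ρ => f ρ * ρ ^ (n - 1) with hh
  set H : ℝ → ℝ := fun r => ∫ ρ in (0:ℝ)..r, h ρ with hH
  have hh_cont : ContinuousOn h (Icc 0 R₂) := hf.mul (continuous_pow _).continuousOn
  have hint : ∀ a b : ℝ, a ∈ Icc (0:ℝ) R₂ → b ∈ Icc (0:ℝ) R₂ →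
      IntervalIntegrable h MeasureTheory.volume a b := by
    intro a b ha hb
    exact (hh_cont.mono (uIcc_subset_Icc ha hb)).intervalIntegrable
  -- part (i).1
  have part1 : ∀ r ∈ Ioc (0:ℝ) R₂, Gbar r = (1 / r ^ n) * H r := by
    intro r hr
    have hr0 : (0:ℝ) < r := hr.1
    have hrn : (r:ℝ) ^ n ≠ 0 := pow_ne_zero _ hr0.ne'
    have hRn : (R₂:ℝ) ^ n ≠ 0 := pow_ne_zero _ hR₂.ne'
    have hadd : (∫ ρ in (0:ℝ)..r, h ρ) + (∫ ρ in r..R₂, h ρ) = ∫ ρ in (0:ℝ)..R₂, h ρ :=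
      integral_add_adjacent_intervals
        (hint 0 r (by simp [hR₂.le]) (by constructor <;> [exact hr0.le; exact hr.2]))
        (hint r R₂ (by constructor <;> [exact hr0.le; exact hr.2]) (by simp [hR₂.le]))
    rw [hGbar r, hD₁]
    rw [hH]
    field_simp
    linarith [hadd]
  -- derivative of the primitive H
  have hH_deriv : ∀ r ∈ Ioc (0:ℝ) R₂, HasDerivWithinAt H (h r) (Ioc (0:ℝ) R₂) r := by
    intro r hr
    rcases eq_or_lt_of_le hr.2 with heq | hlt
    · subst heq
      have hmem : Icc (0:ℝ) r ∈ nhdsWithin r (Iic r) := by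
        rw [← Set.Ici_inter_Iic]
        exact Filter.inter_mem (mem_nhdsWithin_of_mem_nhds (Ici_mem_nhds hr.1))
          self_mem_nhdsWithin
      have hd : HasDerivWithinAt H (h r) (Iic r) r := by
        apply intervalIntegral.integral_hasDerivWithinAt_right (t := Iic r)
          (hint 0 r (by simp [hr.1.le]) (by simp [hr.1.le]))
        · exact ⟨Icc 0 r, hmem, hh_cont.aestronglyMeasurable measurableSet_Icc⟩
        · exact (hh_cont r ⟨hr.1.le, le_rfl⟩).mono_of_mem_nhdsWithin hmem
      exact hd.mono Ioc_subset_Iic_self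
    · have hcont : ContinuousAt h r := hh_cont.continuousAt (Icc_mem_nhds hr.1 hlt)
      have hd : HasDerivAt H (h r) r := by
        apply intervalIntegral.integral_hasDerivAt_right
          (hint 0 r (by simp [hR₂.le]) ⟨hr.1.le, hr.2⟩)
        · exact ⟨Icc 0 R₂, Icc_mem_nhds hr.1 hlt,
            hh_cont.aestronglyMeasurable measurableSet_Icc⟩
        · exact hcont
      exact hd.hasDerivWithinAt
  -- part (i).2
  have part2 : ∀ r ∈ Ioc (0:ℝ) R₂,
      HasDerivWithinAt Gbar (f r / r - n * Gbar r / r) (Ioc (0:ℝ) R₂) r := by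
    intro r hr
    have hr0 : (0:ℝ) < r := hr.1
    have hrn : (r:ℝ) ^ n ≠ 0 := pow_ne_zero _ hr0.ne'
    have hpow : HasDerivAt (fun s : ℝ => ((s:ℝ) ^ n)⁻¹)
        (-(n * r ^ (n - 1)) / (r ^ n) ^ 2) r := (hasDerivAt_pow n r).inv hrn
    have hmul := hpow.hasDerivWithinAt.mul (hH_deriv r hr)
    have hcongr := hmul.congr (fun s hs => (part1 s hs).trans (by rw [one_div]; rfl))
      ((part1 r hr).trans (by rw [one_div]; rfl))
    refine hcongr.congr_deriv (Eq.symm ?_)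
    have e : Gbar r = (1 / r ^ n) * H r := part1 r hr
    have hkey : r ^ (n - 1) * r = r ^ n := by
      rw [← pow_succ]; congr 1; omega
    have hpow1 : r ^ (n - 1) = r ^ n / r := (eq_div_iff hr0.ne').mpr hkey
    rw [e, hh]
    simp only
    rw [hpow1]
    field_simp
    ring
  -- part (ii)
  have part_ii : ∀ x : EuclideanSpace ℝ (Fin n), ‖x‖ = R₂ → u x = 0 := by
    intro x hx
    rw [hu x, hx, intervalIntegral.integral_same]
  -- setup for part (iii)
  have hp1 : (0:ℝ) < p - 1 := by linarith
  have hα_pos : (0:ℝ) < 1 / (p - 1) := by positivity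
  set α : ℝ := 1 / (p - 1) with hα_def
  set g : ℝ → ℝ := fun ρ => Real.sign (Gbar ρ) * |Gbar ρ * ρ| ^ α with hg_def
  have hH_cont : ContinuousOn H (Icc 0 R₂) := by
    have hi : MeasureTheory.IntegrableOn h (uIcc 0 R₂) MeasureTheory.volume := by
      rw [uIcc_of_le hR₂.le]
      exact hh_cont.integrableOn_Icc
    have := intervalIntegral.continuousOn_primitive_interval hi
    rwa [uIcc_of_le hR₂.le] at this
  have hGbar_cont : ContinuousOn Gbar (Ioc 0 R₂) := by
    have hc : ContinuousOn (fun r : ℝ => (1 / r ^ n) * H r) (Ioc 0 R₂) := by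
      apply ContinuousOn.mul
      · exact ContinuousOn.div continuousOn_const (continuous_pow n).continuousOn
          (fun r hr => pow_ne_zero _ (ne_of_gt hr.1))
      · exact hH_cont.mono Ioc_subset_Icc_self
    exact hc.congr part1
  have hg_cont : ContinuousOn g (Ioc 0 R₂) := by
    have h1 : ContinuousOn (fun ρ : ℝ => Real.sign (Gbar ρ * ρ) * |Gbar ρ * ρ| ^ α)
        (Ioc 0 R₂) :=
      (cont_signpow hα_pos).comp_continuousOn (hGbar_cont.mul continuousOn_id)
    refine h1.congr (fun ρ hρ => ?_)
    rw [hg_def]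
    simp only
    rw [real_sign_mul_pos _ hρ.1]
  -- gradient of u
  have hgrad : ∀ y : EuclideanSpace ℝ (Fin n), 0 < ‖y‖ → ‖y‖ < R₂ →
      HasGradientAt u ((g ‖y‖ / ‖y‖) • y) y := by
    intro y hy0 hyR
    have hy_ne : y ≠ 0 := by
      intro h0; rw [h0, norm_zero] at hy0; exact lt_irrefl 0 hy0
    have hsub : uIcc R₂ ‖y‖ ⊆ Ioc 0 R₂ := by
      rw [uIcc_of_ge hyR.le]
      exact fun s hs => ⟨lt_of_lt_of_le hy0 hs.1, hs.2⟩
    have hw : HasDerivAt (fun s => ∫ ρ in R₂..s, g ρ) (g ‖y‖) ‖y‖ := by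
      apply intervalIntegral.integral_hasDerivAt_right
      · exact (hg_cont.mono hsub).intervalIntegrable
      · exact ⟨Ioo 0 R₂, Ioo_mem_nhds hy0 hyR,
          (hg_cont.mono Ioo_subset_Ioc_self).aestronglyMeasurable measurableSet_Ioo⟩
      · exact (hg_cont.mono Ioo_subset_Ioc_self).continuousAt (Ioo_mem_nhds hy0 hyR)
    have hnorm := hasFDerivAt_norm' y hy_ne
    have hcomp := hw.comp_hasFDerivAt y hnorm
    have hueq : u =ᶠ[nhds y] ((fun s => ∫ ρ in R₂..s, g ρ) ∘ fun z => ‖z‖) := by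
      filter_upwards with z
      exact hu z
    have hcomp' : HasFDerivAt u (g ‖y‖ • ‖y‖⁻¹ • innerSL ℝ y) y :=
      hcomp.congr_of_eventuallyEq hueq
    rw [hasGradientAt_iff_hasFDerivAt]
    have htd : (InnerProductSpace.toDual ℝ (EuclideanSpace ℝ (Fin n))) ((g ‖y‖ / ‖y‖) • y)
        = g ‖y‖ • ‖y‖⁻¹ • innerSL ℝ y := by
      ext v
      simp [real_inner_smul_left]
      ring
    rw [htd]
    exact hcomp'
  -- flux identity
  have hflux : ∀ y : EuclideanSpace ℝ (Fin n), 0 < ‖y‖ → ‖y‖ < R₂ →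
      ‖gradient u y‖ ^ (p - 2) • gradient u y = Gbar ‖y‖ • y := by
    intro y hy0 hyR
    rw [(hgrad y hy0 hyR).gradient]
    by_cases hG0 : Gbar ‖y‖ = 0
    · have hgz : g ‖y‖ = 0 := by
        rw [hg_def]; simp [hG0, Real.sign_zero]
      rw [hgz, hG0]
      simp
    · have hA : (0:ℝ) < |Gbar ‖y‖ * ‖y‖| := abs_pos.mpr (mul_ne_zero hG0 (ne_of_gt hy0))
      have hsign : |Real.sign (Gbar ‖y‖)| = 1 := by
        rcases Real.sign_apply_eq_of_ne_zero _ hG0 with hs | hs <;> rw [hs] <;> norm_num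
      have hgabs : |g ‖y‖| = |Gbar ‖y‖ * ‖y‖| ^ α := by
        rw [hg_def]
        simp only
        rw [abs_mul, hsign, one_mul,
          abs_of_nonneg (Real.rpow_nonneg (abs_nonneg _) α)]
      have hnorm_grad : ‖(g ‖y‖ / ‖y‖) • y‖ = |Gbar ‖y‖ * ‖y‖| ^ α := by
        rw [norm_smul, Real.norm_eq_abs, abs_div, abs_of_pos hy0,
          div_mul_cancel₀ _ (ne_of_gt hy0), hgabs]
      rw [hnorm_grad, smul_smul]
      congr 1
      have h1 : (|Gbar ‖y‖ * ‖y‖| ^ α) ^ (p - 2) = |Gbar ‖y‖ * ‖y‖| ^ (α * (p - 2)) :=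
        (Real.rpow_mul (abs_nonneg _) _ _).symm
      have hexp : α * (p - 2) + α = 1 := by
        rw [hα_def]; field_simp; ring
      rw [h1, hg_def]
      simp only
      rw [div_eq_mul_inv]
      calc |Gbar ‖y‖ * ‖y‖| ^ (α * (p - 2)) * (Real.sign (Gbar ‖y‖) * |Gbar ‖y‖ * ‖y‖| ^ α * ‖y‖⁻¹)
          = Real.sign (Gbar ‖y‖) * (|Gbar ‖y‖ * ‖y‖| ^ (α * (p - 2)) * |Gbar ‖y‖ * ‖y‖| ^ α) * ‖y‖⁻¹ := by
            ring
        _ = Real.sign (Gbar ‖y‖) * |Gbar ‖y‖ * ‖y‖| * ‖y‖⁻¹ := by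
            rw [← Real.rpow_add hA, hexp, Real.rpow_one]
        _ = Gbar ‖y‖ := by
            rw [abs_mul, abs_of_pos hy0, ← mul_assoc, real_sign_mul_abs, mul_assoc,
              mul_inv_cancel₀ (ne_of_gt hy0), mul_one]
  refine ⟨⟨part1, part2⟩, part_ii, ?_⟩
  intro x hx0 hxR
  have hx_ne : x ≠ 0 := by
    intro h0; rw [h0, norm_zero] at hx0; exact lt_irrefl 0 hx0
  -- eventual equality with the explicit vector field
  have hS : {y : EuclideanSpace ℝ (Fin n) | 0 < ‖y‖ ∧ ‖y‖ < R₂} ∈ nhds x := by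
    have hopen : IsOpen {y : EuclideanSpace ℝ (Fin n) | 0 < ‖y‖ ∧ ‖y‖ < R₂} := by
      have heq : {y : EuclideanSpace ℝ (Fin n) | 0 < ‖y‖ ∧ ‖y‖ < R₂}
          = (fun y : EuclideanSpace ℝ (Fin n) => ‖y‖) ⁻¹' (Ioo 0 R₂) := rfl
      rw [heq]
      exact isOpen_Ioo.preimage continuous_norm
    exact hopen.mem_nhds ⟨hx0, hxR⟩
  have hFG : (fun y : EuclideanSpace ℝ (Fin n) => ‖gradient u y‖ ^ (p - 2) • gradient u y)
      =ᶠ[nhds x] (fun y : EuclideanSpace ℝ (Fin n) => Gbar ‖y‖ • y) := by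
    filter_upwards [hS] with y hy
    exact hflux y hy.1 hy.2
  -- derivative of the explicit vector field
  have hGt : HasDerivAt Gbar (f ‖x‖ / ‖x‖ - n * Gbar ‖x‖ / ‖x‖) ‖x‖ :=
    (part2 ‖x‖ ⟨hx0, hxR.le⟩).hasDerivAt (Ioc_mem_nhds hx0 hxR)
  have hnormx := hasFDerivAt_norm' x hx_ne
  have hGn : HasFDerivAt (fun y : EuclideanSpace ℝ (Fin n) => Gbar ‖y‖)
      ((f ‖x‖ / ‖x‖ - n * Gbar ‖x‖ / ‖x‖) • ‖x‖⁻¹ • innerSL ℝ x) x :=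
    hGt.comp_hasFDerivAt x hnormx
  have hGfun : HasFDerivAt (fun y : EuclideanSpace ℝ (Fin n) => Gbar ‖y‖ • y)
      (Gbar ‖x‖ • ContinuousLinearMap.id ℝ (EuclideanSpace ℝ (Fin n)) +
        ((f ‖x‖ / ‖x‖ - n * Gbar ‖x‖ / ‖x‖) • ‖x‖⁻¹ • innerSL ℝ x).smulRight x) x :=
    hGn.smul (hasFDerivAt_id x)
  refine ⟨(hgrad x hx0 hxR).differentiableAt, hflux x hx0 hxR,
    hFG.differentiableAt_iff.mpr hGfun.differentiableAt, ?_⟩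
  rw [hFG.fderiv_eq, hGfun.fderiv]
  simp only [ContinuousLinearMap.coe_add, ContinuousLinearMap.coe_smul,
    ContinuousLinearMap.coe_id]
  rw [map_add, map_smul, LinearMap.trace_id, trace_smulRight']
  have happ : (((f ‖x‖ / ‖x‖ - n * Gbar ‖x‖ / ‖x‖) • ‖x‖⁻¹ • innerSL ℝ x)) x
      = (f ‖x‖ / ‖x‖ - n * Gbar ‖x‖ / ‖x‖) * (‖x‖⁻¹ * (‖x‖ ^ 2)) := by
    rw [ContinuousLinearMap.smul_apply, ContinuousLinearMap.smul_apply, innerSL_apply_apply,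
      real_inner_self_eq_norm_sq, smul_eq_mul, smul_eq_mul]
  rw [happ, finrank_euclideanSpace_fin]
  have ht : ‖x‖ ≠ 0 := ne_of_gt hx0
  field_simp
  ring
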